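/- Let K₁, K₂ be convex bodies in ℝⁿ and let T ⊂ ℝ × ℝⁿ × ℝⁿ be the convex hull of {(0, 0, y) : y ∈ K₂} ∪ {(1, x, −x) : x ∈ K₁}. Then the (2n+1)-dimensional Lebesgue volume of T equals (n! · n! / (2n+1)!) · vol_n(K₁) · vol_n(K₂). -/

import Mathlib

open MeasureTheory Set Pointwise
open scoped ENNReal

lemma prod_asc (n : ℕ) :
    n.factorial * ∏ j ∈ Finset.range (n + 1), (n + 1 + j) = (2 * n + 1).factorial := by
  have h : ∀ k, (n+1).ascFactorial k = ∏ j ∈ Finset.range k, (n + 1 + j) := by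
    intro k
    induction k with
    | zero => simp
    | succ k ih => rw [Nat.ascFactorial_succ, Finset.prod_range_succ, ih]; ring
  rw [← h, Nat.factorial_mul_ascFactorial]
  congr 1; ring

lemma beta_int (n : ℕ) :
    ∫ x in (0:ℝ)..1, x ^ n * (1 - x) ^ n
      = (n.factorial * n.factorial : ℕ) / ((2 * n + 1).factorial : ℕ) := by
  have hu : 0 < Complex.re (n + 1) := by
    simp only [Complex.add_re, Complex.natCast_re, Complex.one_re]
    positivity
  have h := Complex.betaIntegral_eval_nat_add_one_right hu n
  rw [Complex.betaIntegral] at h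
  have hexp : ((n:ℂ) + 1) - 1 = (n : ℂ) := by ring
  have hInt : (∫ x : ℝ in (0)..1, (x : ℂ) ^ ((n:ℂ) + 1 - 1) * (1 - (x : ℂ)) ^ ((n:ℂ) + 1 - 1))
      = ((∫ x in (0:ℝ)..1, x ^ n * (1 - x) ^ n : ℝ) : ℂ) := by
    rw [← intervalIntegral.integral_ofReal]
    refine intervalIntegral.integral_congr ?_
    intro x hx
    simp only [hexp, Complex.cpow_natCast]
    push_cast
    ring
  rw [hInt] at h
  have hprod : (∏ j ∈ Finset.range (n + 1), ((n:ℂ) + 1 + (j:ℂ)))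
      = ((∏ j ∈ Finset.range (n + 1), (n + 1 + j) : ℕ) : ℂ) := by push_cast; ring
  rw [hprod] at h
  have hne : ((∏ j ∈ Finset.range (n + 1), (n + 1 + j) : ℕ) : ℂ) ≠ 0 := by
    simp only [ne_eq, Nat.cast_eq_zero]
    positivity
  have : ((∫ x in (0:ℝ)..1, x ^ n * (1 - x) ^ n : ℝ) : ℂ)
      = (((n.factorial * n.factorial : ℕ) : ℝ) / (((2*n+1).factorial : ℕ) : ℝ) : ℝ) := by
    rw [h, Complex.ofReal_div]
    rw [div_eq_div_iff hne (by exact_mod_cast Nat.cast_ne_zero.mpr (2*n+1).factorial_ne_zero)]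
    norm_cast
    rw [← prod_asc n]
    ring
  exact_mod_cast this

theorem godbersen_stmt5 (n : ℕ)
    (K₁ K₂ : Set (EuclideanSpace ℝ (Fin n)))
    (hK₁_compact : IsCompact K₁) (hK₁_conv : Convex ℝ K₁)
    (hK₁_int : (interior K₁).Nonempty)
    (hK₂_compact : IsCompact K₂) (hK₂_conv : Convex ℝ K₂)
    (hK₂_int : (interior K₂).Nonempty)
    (T : Set (ℝ × EuclideanSpace ℝ (Fin n) × EuclideanSpace ℝ (Fin n)))
    (hT : T = convexHull ℝ
      ((fun y => ((0:ℝ), (0 : EuclideanSpace ℝ (Fin n)), y)) '' K₂ ∪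
       (fun x => ((1:ℝ), x, -x)) '' K₁)) :
    volume T = ((n.factorial * n.factorial : ℕ) : ℝ≥0∞) / ((2 * n + 1).factorial : ℕ)
      * volume K₁ * volume K₂ := by
  obtain ⟨a₀, ha₀⟩ := hK₁_int
  have ha₀K : a₀ ∈ K₁ := interior_subset ha₀
  obtain ⟨b₀, hb₀⟩ := hK₂_int
  have hb₀K : b₀ ∈ K₂ := interior_subset hb₀
  -- Step 1: explicit description of T
  have hTS : T = {p : ℝ × EuclideanSpace ℝ (Fin n) × EuclideanSpace ℝ (Fin n) |
      p.1 ∈ Icc (0:ℝ) 1 ∧ p.2.1 ∈ p.1 • K₁ ∧ p.2.1 + p.2.2 ∈ (1 - p.1) • K₂} := by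
    rw [hT]
    apply le_antisymm
    · apply convexHull_min
      · rintro p (⟨y, hy, rfl⟩ | ⟨x, hx, rfl⟩)
        · exact ⟨⟨le_refl 0, zero_le_one⟩, ⟨a₀, ha₀K, by simp⟩, ⟨y, hy, by simp⟩⟩
        · exact ⟨⟨zero_le_one, le_refl 1⟩, ⟨x, hx, by simp⟩, ⟨b₀, hb₀K, by simp⟩⟩
      · rintro ⟨t₁, x₁, y₁⟩ ⟨ht₁, hx₁, hz₁⟩ ⟨t₂, x₂, y₂⟩ ⟨ht₂, hx₂, hz₂⟩ a b ha hb hab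
        obtain ⟨u₁, hu₁, hu₁₀⟩ := hx₁
        obtain ⟨u₂, hu₂, hu₂₀⟩ := hx₂
        obtain ⟨v₁, hv₁, hv₁₀⟩ := hz₁
        obtain ⟨v₂, hv₂, hv₂₀⟩ := hz₂
        have hxu₁ : t₁ • u₁ = x₁ := hu₁₀
        have hxu₂ : t₂ • u₂ = x₂ := hu₂₀
        have hv₁' : (1 - t₁) • v₁ = x₁ + y₁ := hv₁₀
        have hv₂' : (1 - t₂) • v₂ = x₂ + y₂ := hv₂₀
        refine ⟨(convex_Icc (0:ℝ) 1) ht₁ ht₂ ha hb hab, ?_, ?_⟩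
        · show a • x₁ + b • x₂ ∈ (a • t₁ + b • t₂) • K₁
          have h1 : a • x₁ ∈ (a * t₁) • K₁ :=
            ⟨u₁, hu₁, by show (a * t₁) • u₁ = a • x₁; rw [mul_smul, hxu₁]⟩
          have h2 : b • x₂ ∈ (b * t₂) • K₁ :=
            ⟨u₂, hu₂, by show (b * t₂) • u₂ = b • x₂; rw [mul_smul, hxu₂]⟩
          simp only [smul_eq_mul]
          rw [hK₁_conv.add_smul (mul_nonneg ha ht₁.1) (mul_nonneg hb ht₂.1)]
          exact add_mem_add h1 h2
        · show a • x₁ + b • x₂ + (a • y₁ + b • y₂)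
            ∈ (1 - (a • t₁ + b • t₂)) • K₂
          have hcoef : 1 - (a • t₁ + b • t₂) = a * (1 - t₁) + b * (1 - t₂) := by
            simp only [smul_eq_mul]; nlinarith [hab]
          have h1 : a • (x₁ + y₁) ∈ (a * (1 - t₁)) • K₂ :=
            ⟨v₁, hv₁, by show (a * (1 - t₁)) • v₁ = a • (x₁ + y₁); rw [mul_smul, hv₁']⟩
          have h2 : b • (x₂ + y₂) ∈ (b * (1 - t₂)) • K₂ :=
            ⟨v₂, hv₂, by show (b * (1 - t₂)) • v₂ = b • (x₂ + y₂); rw [mul_smul, hv₂']⟩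
          have heq : a • x₁ + b • x₂ + (a • y₁ + b • y₂)
              = a • (x₁ + y₁) + b • (x₂ + y₂) := by
            simp only [smul_add]; abel
          rw [heq, hcoef, hK₂_conv.add_smul (mul_nonneg ha (by linarith [ht₁.2]))
            (mul_nonneg hb (by linarith [ht₂.2]))]
          exact add_mem_add h1 h2
    · rintro ⟨t, x, y⟩ ⟨⟨ht0, ht1⟩, ⟨u, hu, hxu₀⟩, ⟨v, hv, hv₀⟩⟩
      have hxu : t • u = x := hxu₀
      have hv' : (1 - t) • v = x + y := hv₀
      have hp1 : ((1:ℝ), u, -u) ∈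
          ((fun y => ((0:ℝ), (0 : EuclideanSpace ℝ (Fin n)), y)) '' K₂ ∪ (fun x => ((1:ℝ), x, -x)) '' K₁) :=
        Or.inr ⟨u, hu, rfl⟩
      have hp2 : ((0:ℝ), (0:EuclideanSpace ℝ (Fin n)), v) ∈
          ((fun y => ((0:ℝ), (0 : EuclideanSpace ℝ (Fin n)), y)) '' K₂ ∪ (fun x => ((1:ℝ), x, -x)) '' K₁) :=
        Or.inl ⟨v, hv, rfl⟩
      have hmem := (convex_convexHull ℝ _)
        (subset_convexHull ℝ _ hp1) (subset_convexHull ℝ _ hp2)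
        (show (0:ℝ) ≤ t from ht0) (show (0:ℝ) ≤ 1 - t by simp only [Prod.fst] at ht1; linarith)
        (by ring)
      have heq : t • ((1:ℝ), u, -u) + (1 - t) • ((0:ℝ), (0:EuclideanSpace ℝ (Fin n)), v) = (t, x, y) := by
        have h3 : t • -u + (1 - t) • v = y := by
          rw [smul_neg, hxu, hv']
          abel
        simp only [Prod.smul_mk, Prod.mk_add_mk, smul_eq_mul, mul_one, mul_zero, smul_zero,
          add_zero, Prod.mk.injEq]
        exact ⟨trivial, hxu, h3⟩
      rw [heq] at hmem
      exact hmem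
  -- Step 2: T is compact, hence measurable
  have hTimg : T = (fun q : ℝ × EuclideanSpace ℝ (Fin n) × EuclideanSpace ℝ (Fin n) =>
      (q.1, q.1 • q.2.1, (1 - q.1) • q.2.2 - q.1 • q.2.1)) '' (Icc 0 1 ×ˢ K₁ ×ˢ K₂) := by
    rw [hTS]
    ext ⟨t, x, y⟩
    simp only [mem_setOf_eq, Set.mem_image, Set.mem_prod, Prod.mk.injEq]
    constructor
    · rintro ⟨ht, ⟨u, hu, hxu₀⟩, ⟨v, hv, hv₀⟩⟩
      have hxu : t • u = x := hxu₀
      have hv' : (1 - t) • v = x + y := hv₀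
      refine ⟨(t, u, v), ⟨ht, hu, hv⟩, rfl, hxu, ?_⟩
      show (1 - t) • v - t • u = y
      rw [hxu, hv']
      abel
    · rintro ⟨⟨s, u, v⟩, ⟨hs, hu, hv⟩, rfl, rfl, rfl⟩
      refine ⟨hs, ⟨u, hu, rfl⟩, ⟨v, hv, ?_⟩⟩
      show (1 - s) • v = s • u + ((1 - s) • v - s • u)
      abel
  have hTcompact : IsCompact T := by
    rw [hTimg]
    exact (isCompact_Icc.prod (hK₁_compact.prod hK₂_compact)).image (by fun_prop)
  have hTmeas : MeasurableSet T := hTcompact.isClosed.measurableSet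
  -- helper: smul sets are measurable
  have hsmul_meas : ∀ (t : ℝ) (K : Set (EuclideanSpace ℝ (Fin n))), IsCompact K → MeasurableSet (t • K) := by
    intro t K hK
    have : t • K = (fun x : EuclideanSpace ℝ (Fin n) => t • x) '' K := rfl
    rw [this]
    exact (hK.image (continuous_const_smul t)).isClosed.measurableSet
  -- Step 3: volume of the 2n-dim slices
  have hinner : ∀ t : ℝ, volume {q : EuclideanSpace ℝ (Fin n) × EuclideanSpace ℝ (Fin n) | q.1 ∈ t • K₁ ∧ q.1 + q.2 ∈ (1 - t) • K₂}
      = volume (t • K₁) * volume ((1 - t) • K₂) := by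
    intro t
    have hA₁ := hsmul_meas t K₁ hK₁_compact
    have hA₂ := hsmul_meas (1 - t) K₂ hK₂_compact
    have hsetmeas : MeasurableSet {q : EuclideanSpace ℝ (Fin n) × EuclideanSpace ℝ (Fin n) | q.1 ∈ t • K₁ ∧ q.1 + q.2 ∈ (1 - t) • K₂} := by
      have : {q : EuclideanSpace ℝ (Fin n) × EuclideanSpace ℝ (Fin n) | q.1 ∈ t • K₁ ∧ q.1 + q.2 ∈ (1 - t) • K₂}
          = ((t • K₁) ×ˢ (univ : Set (EuclideanSpace ℝ (Fin n)))) ∩ ((fun q : EuclideanSpace ℝ (Fin n) × EuclideanSpace ℝ (Fin n) => q.1 + q.2) ⁻¹' ((1 - t) • K₂)) := by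
        ext q; simp [Set.mem_prod]
      rw [this]
      exact (hA₁.prod MeasurableSet.univ).inter
        (hA₂.preimage (continuous_fst.add continuous_snd).measurable)
    rw [Measure.volume_eq_prod, Measure.prod_apply hsetmeas]
    have hsl : ∀ x : EuclideanSpace ℝ (Fin n), volume (Prod.mk x ⁻¹' {q : EuclideanSpace ℝ (Fin n) × EuclideanSpace ℝ (Fin n) | q.1 ∈ t • K₁ ∧ q.1 + q.2 ∈ (1 - t) • K₂})
        = (t • K₁).indicator (fun _ => volume ((1 - t) • K₂)) x := by
      intro x
      by_cases hx : x ∈ t • K₁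
      · have : Prod.mk x ⁻¹' {q : EuclideanSpace ℝ (Fin n) × EuclideanSpace ℝ (Fin n) | q.1 ∈ t • K₁ ∧ q.1 + q.2 ∈ (1 - t) • K₂}
            = (fun y : EuclideanSpace ℝ (Fin n) => x + y) ⁻¹' ((1 - t) • K₂) := by
          ext y; simp [hx]
        rw [this, Set.indicator_of_mem hx, measure_preimage_add]
      · have : Prod.mk x ⁻¹' {q : EuclideanSpace ℝ (Fin n) × EuclideanSpace ℝ (Fin n) | q.1 ∈ t • K₁ ∧ q.1 + q.2 ∈ (1 - t) • K₂} = ∅ := by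
          ext y; simp [hx]
        rw [this, Set.indicator_of_notMem hx, measure_empty]
    simp only [hsl]
    rw [lintegral_indicator hA₁, setLIntegral_const, mul_comm]
  -- Step 4: main Fubini
  have hslice : ∀ t : ℝ, volume (Prod.mk t ⁻¹' T)
      = (Icc (0:ℝ) 1).indicator
          (fun t => volume (t • K₁) * volume ((1 - t) • K₂)) t := by
    intro t
    by_cases ht : t ∈ Icc (0:ℝ) 1
    · have : Prod.mk t ⁻¹' T = {q : EuclideanSpace ℝ (Fin n) × EuclideanSpace ℝ (Fin n) | q.1 ∈ t • K₁ ∧ q.1 + q.2 ∈ (1 - t) • K₂} := by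
        rw [hTS]; ext q
        exact ⟨fun h => ⟨h.2.1, h.2.2⟩, fun h => ⟨ht, h.1, h.2⟩⟩
      rw [this, hinner t, Set.indicator_of_mem ht]
    · have : Prod.mk t ⁻¹' T = ∅ := by
        rw [hTS]; ext q
        simp only [mem_preimage, mem_empty_iff_false, iff_false]
        exact fun h => ht h.1
      rw [this, measure_empty, Set.indicator_of_notMem ht]
  have hfin : Module.finrank ℝ (EuclideanSpace ℝ (Fin n)) = n := finrank_euclideanSpace_fin
  have hvolT : volume T = ∫⁻ t in Icc (0:ℝ) 1,
      ENNReal.ofReal (t ^ n * (1 - t) ^ n) * (volume K₁ * volume K₂) := by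
    rw [Measure.volume_eq_prod, Measure.prod_apply hTmeas]
    simp only [hslice]
    rw [lintegral_indicator measurableSet_Icc]
    refine setLIntegral_congr_fun measurableSet_Icc ?_
    intro t ht
    beta_reduce
    rw [Measure.addHaar_smul_of_nonneg volume ht.1 K₁,
      Measure.addHaar_smul_of_nonneg volume (by linarith [ht.2] : (0:ℝ) ≤ 1 - t) K₂, hfin,
      ENNReal.ofReal_mul (pow_nonneg ht.1 n)]
    ring
  rw [hvolT, lintegral_mul_const _ (by fun_prop)]
  have hIcc : (∫⁻ t in Icc (0:ℝ) 1, ENNReal.ofReal (t ^ n * (1 - t) ^ n))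
      = ENNReal.ofReal ((n.factorial * n.factorial : ℕ) / ((2 * n + 1).factorial : ℕ) : ℝ) := by
    rw [← ofReal_integral_eq_lintegral_ofReal
      ((Continuous.integrableOn_Icc (by fun_prop)))
      ((ae_restrict_iff' measurableSet_Icc).2 (Filter.Eventually.of_forall fun t ht =>
        mul_nonneg (pow_nonneg ht.1 n) (pow_nonneg (by linarith [ht.2]) n)))]
    congr 1
    rw [MeasureTheory.integral_Icc_eq_integral_Ioc,
      ← intervalIntegral.integral_of_le zero_le_one, beta_int n]
  rw [hIcc, ENNReal.ofReal_div_of_pos (by positivity), ENNReal.ofReal_natCast,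
    ENNReal.ofReal_natCast, mul_assoc]
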